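/- For integers m,n ≥ 0, real p, b > 0, and real ζ, one has G_ξ^{m,n,m+n+1}(b,ζ) = Σ_{i=0}^n C(n,i) · ζ^{m+i+1} ξ^{n-i} / (m+i+1), where G_ξ^{m,n,k}(x,y) := (1/k!) d^k/dt^k |_{t=0} ∫_0^{x+ty} s^m (1+tξ+s)^n ds evaluated at k = m+n+1. -/

import Mathlib

open Polynomial

/-- Coefficient of a power of a linear polynomial. -/
lemma coeff_binom_pow (a c : ℝ) (N k : ℕ) :
    ((C a + C c * X : ℝ[X]) ^ N).coeff k = a ^ (N - k) * c ^ k * (N.choose k : ℝ) := by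
  rw [add_pow, finset_sum_coeff]
  have hterm : ∀ j, ((C a) ^ j * (C c * X) ^ (N - j) * ((N.choose j : ℕ) : ℝ[X])).coeff k
      = if k = N - j then a ^ j * c ^ (N - j) * (N.choose j : ℝ) else 0 := by
    intro j
    rw [mul_pow, ← C_pow, ← C_pow, ← C_eq_natCast]
    rw [show C (a ^ j) * (C (c ^ (N - j)) * X ^ (N - j)) * C ((N.choose j : ℝ))
        = C (a ^ j * c ^ (N - j) * (N.choose j : ℝ)) * X ^ (N - j) by
          rw [C_mul, C_mul]; ring]
    rw [coeff_C_mul, coeff_X_pow]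
    split <;> simp
  by_cases hk : k ≤ N
  · rw [Finset.sum_eq_single (N - k)]
    · rw [hterm, if_pos (by omega), Nat.choose_symm hk, Nat.sub_sub_self hk]
    · intro j hj hne
      rw [hterm, if_neg]
      simp only [Finset.mem_range] at hj
      omega
    · intro h
      exact absurd (Finset.mem_range.2 (by omega)) h
  · rw [Nat.choose_eq_zero_of_lt (by omega)]
    rw [Finset.sum_eq_zero]
    · simp
    · intro j hj
      rw [hterm, if_neg (by simp only [Finset.mem_range] at hj; omega)]

lemma iteratedDeriv_polynomial (p : ℝ[X]) (k : ℕ) :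
    iteratedDeriv k (fun x => p.eval x) = fun x => (derivative^[k] p).eval x := by
  induction k with
  | zero => simp
  | succ k ih =>
    rw [iteratedDeriv_succ, ih, Function.iterate_succ_apply']
    funext x
    exact Polynomial.deriv (p := derivative^[k] p)

/-- The Fang–Lai polynomial G_ξ^{m,n,k}(x,y), defined as the k-th Taylor
coefficient in t at t = 0 of ∫_0^{x+ty} s^m (1+tξ+s)^n ds. -/
noncomputable def G (m n k : ℕ) (ξ x y : ℝ) : ℝ :=
  iteratedDeriv k (fun t => ∫ s in (0:ℝ)..(x + t * y), s ^ m * (1 + t * ξ + s) ^ n) 0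
    / (Nat.factorial k : ℝ)

/-- Explicit formula for G_ξ^{m,n,m+n+1}(b,ζ). -/
theorem G_top_degree_formula (m n : ℕ) (ξ b ζ : ℝ) (hb : 0 < b) :
    G m n (m + n + 1) ξ b ζ
      = ∑ i ∈ Finset.range (n + 1),
          (n.choose i : ℝ) * ζ ^ (m + i + 1) * ξ ^ (n - i) / (m + i + 1 : ℝ) := by
  set k := m + n + 1 with hk
  set P : ℝ[X] := ∑ i ∈ Finset.range (n + 1),
      C ((n.choose i : ℝ) / (m + i + 1 : ℝ)) * ((C 1 + C ξ * X) ^ (n - i)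
        * ((C b + C ζ * X) ^ (m + i + 1))) with hP
  -- Step 1: the integrand function equals P.eval
  have hfun : (fun t => ∫ s in (0:ℝ)..(b + t * ζ), s ^ m * (1 + t * ξ + s) ^ n)
      = fun t => P.eval t := by
    funext t
    have hexp : ∀ s : ℝ, s ^ m * (1 + t * ξ + s) ^ n
        = ∑ i ∈ Finset.range (n + 1),
            (n.choose i : ℝ) * (1 + t * ξ) ^ (n - i) * s ^ (m + i) := by
      intro s
      rw [show (1 + t * ξ + s) = s + (1 + t * ξ) by ring, add_pow, Finset.mul_sum]
      refine Finset.sum_congr rfl fun i hi => ?_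
      rw [pow_add]
      ring
    have hint : ∀ i ∈ Finset.range (n + 1), IntervalIntegrable
        (fun s : ℝ => (n.choose i : ℝ) * (1 + t * ξ) ^ (n - i) * s ^ (m + i))
        MeasureTheory.volume 0 (b + t * ζ) := fun i _ =>
      (Continuous.intervalIntegrable (by continuity) 0 (b + t * ζ))
    calc (∫ s in (0:ℝ)..(b + t * ζ), s ^ m * (1 + t * ξ + s) ^ n)
        = ∫ s in (0:ℝ)..(b + t * ζ), ∑ i ∈ Finset.range (n + 1),
            (n.choose i : ℝ) * (1 + t * ξ) ^ (n - i) * s ^ (m + i) := by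
          simp_rw [hexp]
      _ = ∑ i ∈ Finset.range (n + 1), ∫ s in (0:ℝ)..(b + t * ζ),
            (n.choose i : ℝ) * (1 + t * ξ) ^ (n - i) * s ^ (m + i) :=
          intervalIntegral.integral_finset_sum hint
      _ = P.eval t := by
          rw [hP]
          simp only [eval_finset_sum, eval_mul, eval_add, eval_C, eval_X, eval_pow, eval_one]
          refine Finset.sum_congr rfl fun i hi => ?_
          rw [intervalIntegral.integral_const_mul, integral_pow]
          have hpos : ((m + i : ℕ) + 1 : ℝ) ≠ 0 := by positivity
          push_cast
          field_simp
          ring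
  -- Step 2: the top coefficient of P
  have hcoeff : P.coeff k = ∑ i ∈ Finset.range (n + 1),
      (n.choose i : ℝ) / (m + i + 1 : ℝ) * (ξ ^ (n - i) * ζ ^ (m + i + 1)) := by
    rw [hP, finset_sum_coeff]
    refine Finset.sum_congr rfl fun i hi => ?_
    simp only [Finset.mem_range] at hi
    have hin : i ≤ n := by omega
    rw [coeff_C_mul, coeff_mul]
    congr 1
    rw [Finset.sum_eq_single ((n - i, m + i + 1) : ℕ × ℕ)]
    · rw [coeff_binom_pow, coeff_binom_pow]
      simp [Nat.sub_self]
    · rintro ⟨x, y⟩ hxy hne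
      rw [Finset.HasAntidiagonal.mem_antidiagonal] at hxy
      rw [coeff_binom_pow, coeff_binom_pow]
      rcases lt_or_ge (n - i) x with h | h
      · rw [Nat.choose_eq_zero_of_lt h]
        simp
      · have hxy' : x + y = k := hxy
        have hne' : ¬(x = n - i ∧ y = m + i + 1) := by
          rintro ⟨h1, h2⟩
          exact hne (by rw [h1, h2])
        have hy : m + i + 1 < y := by omega
        rw [Nat.choose_eq_zero_of_lt hy]
        simp
    · intro h
      exact absurd (Finset.HasAntidiagonal.mem_antidiagonal.2 (by omega)) h
  -- Step 3: conclude
  rw [G, hfun, iteratedDeriv_polynomial]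
  simp only [← coeff_zero_eq_eval_zero, coeff_iterate_derivative, zero_add,
    Nat.descFactorial_self, nsmul_eq_mul]
  rw [mul_comm, mul_div_assoc,
    div_self (Nat.cast_ne_zero.2 (Nat.factorial_ne_zero _)), mul_one]
  rw [hcoeff]
  refine Finset.sum_congr rfl fun i hi => ?_
  push_cast
  ring
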